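/- Let m ≥ 2, 1 ≤ ℓ ≤ m, and let (f_1, …, f_ℓ) be a (2m, ℓ) bent vectorial function on GF(2^{2m}). Then the supports of the codewords of Hamming weight 2^{2m−1} + 2^{m−1} of C(f_1, …, f_ℓ) hold a 2-design: for every two distinct elements x, y of GF(2^{2m}), the number of codewords c of C(f_1, …, f_ℓ) of Hamming weight 2^{2m−1} + 2^{m−1} with c_x = c_y = 1 is exactly (2^ℓ − 1)(2^{2m−2} + 2^{m−1}). -/

import Mathlib

noncomputable section

/-- The finite field `GF(2^n)` is finite. -/
instance (n : ℕ) : Fintype (GaloisField 2 n) := Fintype.ofFinite _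

/-- The absolute trace map from `GF(2^(2m))` to `GF(2)`. -/
def tr (m : ℕ) (x : GaloisField 2 (2*m)) : ZMod 2 :=
  Algebra.trace (ZMod 2) (GaloisField 2 (2*m)) x

/-- A Boolean function `f : GF(2^(2m)) → GF(2)` is bent if all its Walsh
transform values have absolute value `2^m`. -/
def IsBent (m : ℕ) (f : GaloisField 2 (2*m) → ZMod 2) : Prop :=
  ∀ w : GaloisField 2 (2*m),
    |∑ x : GaloisField 2 (2*m), (-1 : ℤ) ^ ((f x + tr m (w * x)).val)| = 2 ^ m

/-- A tuple `(f 0, …, f (ℓ-1))` of Boolean functions on `GF(2^(2m))` is a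
`(2m, ℓ)` bent vectorial function if every nonzero `GF(2)`-linear combination
of the `f j` is bent. -/
def IsBentVectorial (m ℓ : ℕ) (f : Fin ℓ → GaloisField 2 (2*m) → ZMod 2) : Prop :=
  ∀ a : Fin ℓ → ZMod 2, a ≠ 0 → IsBent m (fun x => ∑ j, a j * f j x)

/-- The binary linear code `C(f 0, …, f (ℓ-1))` of length `2^(2m)` (with
coordinates indexed by `GF(2^(2m))`, a codeword being a function
`GF(2^(2m)) → GF(2)`, i.e. the truth table of a Boolean function), spanned by
the truth tables of the `f j`, the truth tables of the linear functions
`x ↦ tr (w * x)` for all `w`, and the all-one vector. -/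
def code (m ℓ : ℕ) (f : Fin ℓ → GaloisField 2 (2*m) → ZMod 2) :
    Submodule (ZMod 2) (GaloisField 2 (2*m) → ZMod 2) :=
  Submodule.span (ZMod 2)
    (Set.range f ∪ Set.range (fun w => fun x => tr m (w * x)) ∪ {fun _ => (1 : ZMod 2)})

/-- The Hamming weight of a codeword: the number of nonzero coordinates. -/
def wt (m : ℕ) (c : GaloisField 2 (2*m) → ZMod 2) : ℕ :=
  {x | c x ≠ 0}.ncard

/-- The support of a codeword: the set of coordinates where it is nonzero. -/
def supp (m : ℕ) (c : GaloisField 2 (2*m) → ZMod 2) : Set (GaloisField 2 (2*m)) :=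
  {x | c x ≠ 0}


section Aux

set_option synthInstance.maxHeartbeats 1000000 in
instance (m : ℕ) : Algebra.IsSeparable (ZMod 2) (GaloisField 2 (2*m)) := inferInstance

def sg (v : ZMod 2) : ℤ := (-1)^v.val

lemma zmod2_cases (v : ZMod 2) : v = 0 ∨ v = 1 := by revert v; decide
lemma sg_add (u v : ZMod 2) : sg (u+v) = sg u * sg v := by revert u v; decide
lemma sg_zero : sg 0 = 1 := by decide
lemma sg_one : sg 1 = -1 := by decide
lemma sg_sq (v : ZMod 2) : sg v * sg v = 1 := by revert v; decide
lemma sg_cases (v : ZMod 2) : sg v = 1 ∨ sg v = -1 := by revert v; decide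
lemma sg_eq_neg_one_iff (v : ZMod 2) : sg v = -1 ↔ v = 1 := by revert v; decide
lemma sg_val (v : ZMod 2) : sg v = 1 - 2 * (v.val : ℤ) := by revert v; decide

lemma card_F (m : ℕ) (hm : 1 ≤ m) : Fintype.card (GaloisField 2 (2*m)) = 2^(2*m) := by
  rw [← Nat.card_eq_fintype_card]; exact GaloisField.card 2 (2*m) (by omega)

lemma tr_exists (m : ℕ) (t : GaloisField 2 (2*m)) (ht : t ≠ 0) :
    ∃ w, tr m (w * t) = 1 := by
  have hnd := traceForm_nondegenerate (ZMod 2) (GaloisField 2 (2*m))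
  by_contra hc
  push_neg at hc
  apply ht
  apply hnd.1 t
  intro n
  have h1 := hc n
  rcases zmod2_cases (tr m (n*t)) with h | h
  · simpa [Algebra.traceForm_apply, tr, mul_comm] using h
  · exact absurd h h1

lemma tr_mul_add (m : ℕ) (w a b : GaloisField 2 (2*m)) :
    tr m (w * (a + b)) = tr m (w * a) + tr m (w * b) := by
  rw [mul_add]; exact map_add _ _ _

open Classical in
lemma char_sum (m : ℕ) (hm : 1 ≤ m) (t : GaloisField 2 (2*m)) :
    ∑ w : GaloisField 2 (2*m), sg (tr m (w * t)) =
      if t = 0 then (2^(2*m) : ℤ) else 0 := by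
  split_ifs with h
  · subst h
    simp only [mul_zero]
    have : tr m 0 = 0 := map_zero _
    simp [this, sg_zero, card_F m hm]
  · obtain ⟨w0, hw0⟩ := tr_exists m t h
    have hre : ∑ w : GaloisField 2 (2*m), sg (tr m (w * t)) =
        ∑ w : GaloisField 2 (2*m), sg (tr m ((w + w0) * t)) :=
      (Fintype.sum_equiv (Equiv.addRight w0) _ _ (fun w => rfl)).symm
    have hstep : ∀ w : GaloisField 2 (2*m),
        sg (tr m ((w + w0) * t)) = - sg (tr m (w * t)) := by
      intro w
      have : tr m ((w + w0) * t) = tr m (w * t) + tr m (w0 * t) := by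
        rw [add_mul]; exact map_add _ _ _
      rw [this, hw0, sg_add, sg_one]; ring
    have h2 : ∑ w : GaloisField 2 (2*m), sg (tr m (w * t)) =
        - ∑ w : GaloisField 2 (2*m), sg (tr m (w * t)) := by
      nth_rewrite 1 [hre]
      simp [hstep]
    linarith

lemma tr_lin (m : ℕ) (w a b : GaloisField 2 (2*m)) :
    tr m (w * a) + tr m (w * b) = tr m (w * (a + b)) := by
  rw [mul_add]; exact (map_add _ _ _).symm

-- key2
lemma key2 (m : ℕ) (hm : 1 ≤ m) (g : GaloisField 2 (2*m) → ZMod 2)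
    (x : GaloisField 2 (2*m)) :
    ∑ w : GaloisField 2 (2*m),
      (∑ z : GaloisField 2 (2*m), sg (g z + tr m (w * z))) * sg (g x + tr m (w * x))
      = 2^(2*m) := by
  classical
  have h1 : ∀ w, (∑ z : GaloisField 2 (2*m), sg (g z + tr m (w * z))) * sg (g x + tr m (w * x))
      = ∑ z : GaloisField 2 (2*m), (sg (g z) * sg (g x)) * sg (tr m (w * (z + x))) := by
    intro w
    rw [Finset.sum_mul]
    refine Finset.sum_congr rfl fun z _ => ?_
    rw [sg_add, sg_add, ← tr_lin]
    rw [sg_add]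
    ring
  simp only [h1]
  rw [Finset.sum_comm]
  have h2 : ∀ z : GaloisField 2 (2*m),
      ∑ w : GaloisField 2 (2*m), (sg (g z) * sg (g x)) * sg (tr m (w * (z + x)))
      = (sg (g z) * sg (g x)) * (if z + x = 0 then (2^(2*m) : ℤ) else 0) := by
    intro z
    rw [← Finset.mul_sum, char_sum m hm]
  simp only [h2]
  have h3 : ∀ z : GaloisField 2 (2*m), z + x = 0 ↔ z = x := by
    intro z
    constructor
    · intro h
      linear_combination h - CharTwo.add_self_eq_zero x
    · intro h; subst h; exact CharTwo.add_self_eq_zero z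
  simp only [h3, mul_ite, mul_zero]
  rw [Finset.sum_ite_eq' Finset.univ x (fun z => sg (g z) * sg (g x) * 2^(2*m))]
  simp [sg_sq]

lemma key3 (m : ℕ) (hm : 1 ≤ m) (g : GaloisField 2 (2*m) → ZMod 2)
    (x y : GaloisField 2 (2*m)) (hxy : x ≠ y) :
    ∑ w : GaloisField 2 (2*m), sg (g x + tr m (w * x)) * sg (g y + tr m (w * y)) = 0 := by
  classical
  have h1 : ∀ w : GaloisField 2 (2*m), sg (g x + tr m (w * x)) * sg (g y + tr m (w * y))
      = (sg (g x) * sg (g y)) * sg (tr m (w * (x + y))) := by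
    intro w
    rw [sg_add, sg_add, ← tr_lin, sg_add]; ring
  simp only [h1]
  rw [← Finset.mul_sum, char_sum m hm]
  have hne : x + y ≠ 0 := by
    intro h
    exact hxy (by linear_combination h - CharTwo.add_self_eq_zero y)
  simp [hne]

lemma S_eq_wt (m : ℕ) (hm : 1 ≤ m) (c : GaloisField 2 (2*m) → ZMod 2) :
    ∑ z : GaloisField 2 (2*m), sg (c z) = 2^(2*m) - 2 * (wt m c : ℤ) := by
  classical
  have h1 : ∀ z, sg (c z) = 1 - 2 * ((c z).val : ℤ) := fun z => sg_val _
  simp only [h1]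
  rw [Finset.sum_sub_distrib, Finset.sum_const, ← Finset.mul_sum]
  have h2 : ∑ z : GaloisField 2 (2*m), ((c z).val : ℤ) = (wt m c : ℤ) := by
    have h3 : ∀ z, ((c z).val : ℤ) = if c z ≠ 0 then 1 else 0 := by
      intro z
      rcases zmod2_cases (c z) with h | h <;> simp [h, ZMod.val_one]
    simp only [h3]
    rw [Finset.sum_ite, Finset.sum_const, Finset.sum_const]
    have h4 : wt m c = (Finset.univ.filter (fun z => c z ≠ 0)).card := by
      rw [wt, Set.ncard_eq_toFinset_card']
      congr 1
      ext z
      simp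
    rw [h4]; push_cast; ring
  rw [h2, nsmul_eq_mul, mul_one, Finset.card_univ, card_F m hm]
  push_cast; ring

lemma wt_iff (m : ℕ) (hm : 1 ≤ m) (c : GaloisField 2 (2*m) → ZMod 2) :
    wt m c = 2^(2*m-1) + 2^(m-1) ↔
      ∑ z : GaloisField 2 (2*m), sg (c z) = -(2^m : ℤ) := by
  rw [S_eq_wt m hm c]
  have e1 : (2:ℤ) * 2^(2*m-1) = 2^(2*m) := by
    rw [← pow_succ']; congr 1; omega
  have e2 : (2:ℤ) * 2^(m-1) = 2^m := by
    rw [← pow_succ']; congr 1; omega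
  constructor
  · intro h
    rw [h]; push_cast; linarith
  · intro h
    have h5 : (wt m c : ℤ) = 2^(2*m-1) + 2^(m-1) := by linarith
    exact_mod_cast h5

lemma tr_add (m : ℕ) (a b : GaloisField 2 (2*m)) : tr m (a+b) = tr m a + tr m b :=
  LinearMap.map_add _ a b
lemma tr_zero (m : ℕ) : tr m 0 = 0 :=
  LinearMap.map_zero _

/-- truth table of the linear combination given by `a` -/
def gg (m ℓ : ℕ) (f : Fin ℓ → GaloisField 2 (2*m) → ZMod 2) (a : Fin ℓ → ZMod 2)
    (z : GaloisField 2 (2*m)) : ZMod 2 := ∑ j, a j * f j z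

/-- the general codeword parametrized by `(a, w, ε)` -/
def cw (m ℓ : ℕ) (f : Fin ℓ → GaloisField 2 (2*m) → ZMod 2)
    (p : (Fin ℓ → ZMod 2) × GaloisField 2 (2*m) × ZMod 2) :
    GaloisField 2 (2*m) → ZMod 2 :=
  fun z => gg m ℓ f p.1 z + tr m (p.2.1 * z) + p.2.2

lemma gg_zero (m ℓ : ℕ) (f : Fin ℓ → GaloisField 2 (2*m) → ZMod 2)
    (z : GaloisField 2 (2*m)) : gg m ℓ f 0 z = 0 := by
  simp [gg]

lemma cw_zero_eval (m ℓ : ℕ) (f : Fin ℓ → GaloisField 2 (2*m) → ZMod 2)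
    (ε : ZMod 2) (z : GaloisField 2 (2*m)) : cw m ℓ f (0, 0, ε) z = ε := by
  simp only [cw, gg_zero, zero_mul, tr_zero, zero_add]

lemma cw_add (m ℓ : ℕ) (f : Fin ℓ → GaloisField 2 (2*m) → ZMod 2)
    (p q : (Fin ℓ → ZMod 2) × GaloisField 2 (2*m) × ZMod 2) :
    cw m ℓ f (p + q) = cw m ℓ f p + cw m ℓ f q := by
  funext z
  simp only [cw, gg, Pi.add_apply, Prod.fst_add, Prod.snd_add]
  rw [add_mul, tr_add]
  have hs : ∑ j, (p.1 j + q.1 j) * f j z = (∑ j, p.1 j * f j z) + ∑ j, q.1 j * f j z := by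
    rw [← Finset.sum_add_distrib]
    exact Finset.sum_congr rfl fun j _ => by ring
  rw [hs]
  ring

lemma cw_mem (m ℓ : ℕ) (f : Fin ℓ → GaloisField 2 (2*m) → ZMod 2)
    (p : (Fin ℓ → ZMod 2) × GaloisField 2 (2*m) × ZMod 2) :
    cw m ℓ f p ∈ code m ℓ f := by
  classical
  have hdecomp : cw m ℓ f p =
      (∑ j, p.1 j • f j) + (fun z => tr m (p.2.1 * z)) + p.2.2 • (fun _ => (1:ZMod 2)) := by
    funext z
    simp only [cw, gg, Pi.add_apply, Pi.smul_apply, Finset.sum_apply, smul_eq_mul, mul_one]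
  rw [hdecomp]
  apply Submodule.add_mem
  apply Submodule.add_mem
  · apply Submodule.sum_mem
    intro j _
    exact Submodule.smul_mem _ _ (Submodule.subset_span (Or.inl (Or.inl ⟨j, rfl⟩)))
  · exact Submodule.subset_span (Or.inl (Or.inr ⟨p.2.1, rfl⟩))
  · exact Submodule.smul_mem _ _ (Submodule.subset_span (Or.inr rfl))

lemma mem_code (m ℓ : ℕ) (f : Fin ℓ → GaloisField 2 (2*m) → ZMod 2)
    (c : GaloisField 2 (2*m) → ZMod 2) (hc : c ∈ code m ℓ f) :
    ∃ p, cw m ℓ f p = c := by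
  classical
  refine Submodule.span_induction ?_ ?_ ?_ ?_ hc
  · rintro v (( ⟨j, rfl⟩ | ⟨w, rfl⟩ ) | hv)
    · refine ⟨(Pi.single j 1, 0, 0), ?_⟩
      funext z
      simp only [cw, gg, zero_mul, tr_zero, add_zero]
      rw [Finset.sum_eq_single j]
      · simp
      · intro i _ hij; simp [Pi.single_apply, hij]
      · simp
    · refine ⟨(0, w, 0), ?_⟩
      funext z
      simp only [cw, gg_zero, zero_add, add_zero]
    · rw [Set.mem_singleton_iff] at hv
      subst hv
      exact ⟨(0, 0, 1), funext fun z => cw_zero_eval m ℓ f 1 z⟩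
  · exact ⟨0, funext fun z => cw_zero_eval m ℓ f 0 z⟩
  · rintro u v _ _ ⟨p, rfl⟩ ⟨q, rfl⟩
    exact ⟨p + q, cw_add m ℓ f p q⟩
  · rintro r v _ ⟨p, rfl⟩
    rcases zmod2_cases r with h | h
    · subst h
      rw [zero_smul]
      exact ⟨0, funext fun z => cw_zero_eval m ℓ f 0 z⟩
    · subst h
      exact ⟨p, by rw [one_smul]⟩

lemma param_add_self (m ℓ : ℕ) (p : (Fin ℓ → ZMod 2) × GaloisField 2 (2*m) × ZMod 2) :
    p + p = 0 := by
  have h1 : p.1 + p.1 = 0 := by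
    funext j; exact CharTwo.add_self_eq_zero _
  have h2 : p.2.1 + p.2.1 = 0 := CharTwo.add_self_eq_zero _
  have h3 : p.2.2 + p.2.2 = 0 := CharTwo.add_self_eq_zero _
  ext <;> simp_all [Prod.add_def]

lemma cw_ker (m ℓ : ℕ) (hm : 1 ≤ m) (f : Fin ℓ → GaloisField 2 (2*m) → ZMod 2)
    (hf : IsBentVectorial m ℓ f) (p : (Fin ℓ → ZMod 2) × GaloisField 2 (2*m) × ZMod 2)
    (h : cw m ℓ f p = 0) : p = 0 := by
  obtain ⟨a, w, ε⟩ := p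
  have hz : ∀ z, gg m ℓ f a z + tr m (w * z) + ε = 0 := fun z => congrFun h z
  have hz' : ∀ z, gg m ℓ f a z + tr m (w * z) = ε := by
    intro z
    have := hz z
    linear_combination this - CharTwo.add_self_eq_zero ε
  by_cases ha : a = 0
  · subst ha
    have he : ε = 0 := by
      have := hz' 0
      simpa [gg_zero, tr_zero] using this.symm
    subst he
    have hw : w = 0 := by
      by_contra hw
      obtain ⟨w', hw'⟩ := tr_exists m w hw
      have := hz' w'
      rw [gg_zero, zero_add, mul_comm] at this
      rw [hw'] at this
      exact one_ne_zero this
    subst hw; rfl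
  · exfalso
    have hb := hf a ha w
    have heq : ∀ z : GaloisField 2 (2*m),
        (-1 : ℤ) ^ (((fun x => ∑ j, a j * f j x) z + tr m (w * z)).val) = sg ε := by
      intro z
      have : (fun x => ∑ j, a j * f j x) z + tr m (w * z) = ε := hz' z
      rw [this]; rfl
    rw [Finset.sum_congr rfl (fun z _ => heq z)] at hb
    rw [Finset.sum_const, Finset.card_univ, card_F m hm] at hb
    have habs : |(2^(2*m) : ℤ) * sg ε| = 2^(2*m) := by
      rcases zmod2_cases ε with h | h <;> subst h <;>
        simp [sg_zero, sg_one, abs_of_nonneg, pow_nonneg]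
    rw [nsmul_eq_mul] at hb
    push_cast at hb
    rw [habs] at hb
    have : (2:ℤ)^m < 2^(2*m) := by
      apply pow_lt_pow_right₀ (by norm_num) (by omega)
    linarith

lemma cw_inj (m ℓ : ℕ) (hm : 1 ≤ m) (f : Fin ℓ → GaloisField 2 (2*m) → ZMod 2)
    (hf : IsBentVectorial m ℓ f) :
    Function.Injective (cw m ℓ f) := by
  intro p q h
  have h0 : cw m ℓ f (p + q) = 0 := by
    rw [cw_add, h]
    funext z
    show cw m ℓ f q z + cw m ℓ f q z = 0
    exact CharTwo.add_self_eq_zero _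
  have hpq := cw_ker m ℓ hm f hf _ h0
  calc p = p + (q + q) := by rw [param_add_self m ℓ q, add_zero]
    _ = (p + q) + q := (add_assoc p q q).symm
    _ = q := by rw [hpq, zero_add]

lemma S_cw (m ℓ : ℕ) (f : Fin ℓ → GaloisField 2 (2*m) → ZMod 2)
    (a : Fin ℓ → ZMod 2) (w : GaloisField 2 (2*m)) (ε : ZMod 2) :
    ∑ z : GaloisField 2 (2*m), sg (cw m ℓ f (a, w, ε) z)
      = sg ε * ∑ z : GaloisField 2 (2*m), sg (gg m ℓ f a z + tr m (w * z)) := by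
  rw [Finset.mul_sum]
  refine Finset.sum_congr rfl fun z _ => ?_
  show sg (gg m ℓ f a z + tr m (w * z) + ε) = _
  rw [sg_add]; ring

lemma sg_cw (m ℓ : ℕ) (f : Fin ℓ → GaloisField 2 (2*m) → ZMod 2)
    (a : Fin ℓ → ZMod 2) (w : GaloisField 2 (2*m)) (ε : ZMod 2)
    (x : GaloisField 2 (2*m)) :
    sg (cw m ℓ f (a, w, ε) x) = sg (gg m ℓ f a x + tr m (w * x)) * sg ε := by
  show sg (gg m ℓ f a x + tr m (w * x) + ε) = _
  rw [sg_add]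

open Classical in
lemma count_a_ne (m ℓ : ℕ) (hm : 2 ≤ m) (f : Fin ℓ → GaloisField 2 (2*m) → ZMod 2)
    (hf : IsBentVectorial m ℓ f) (a : Fin ℓ → ZMod 2) (ha : a ≠ 0)
    (x y : GaloisField 2 (2*m)) (hxy : x ≠ y) :
    (Finset.univ.filter (fun q : GaloisField 2 (2*m) × ZMod 2 =>
      wt m (cw m ℓ f (a, q)) = 2^(2*m-1) + 2^(m-1) ∧
      cw m ℓ f (a, q) x = 1 ∧ cw m ℓ f (a, q) y = 1)).card
    = 2^(2*m-2) + 2^(m-1) := by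
  classical
  have hm1 : 1 ≤ m := by omega
  set W : GaloisField 2 (2*m) → ℤ :=
    fun w => ∑ z : GaloisField 2 (2*m), sg (gg m ℓ f a z + tr m (w * z)) with hWdef
  have hW : ∀ w, W w = 2^m ∨ W w = -2^m := by
    intro w
    have hb := hf a ha w
    have : |W w| = 2^m := hb
    rcases abs_eq (by positivity : (0:ℤ) ≤ 2^m) |>.mp this with h | h
    · exact Or.inl h
    · exact Or.inr h
  set cond : GaloisField 2 (2*m) × ZMod 2 → Prop := fun q =>
      wt m (cw m ℓ f (a, q)) = 2^(2*m-1) + 2^(m-1) ∧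
      cw m ℓ f (a, q) x = 1 ∧ cw m ℓ f (a, q) y = 1 with hconddef
  set N := (Finset.univ.filter cond).card with hNdef
  set tX : GaloisField 2 (2*m) → ℤ := fun w => sg (gg m ℓ f a x + tr m (w * x)) with htX
  set tY : GaloisField 2 (2*m) → ℤ := fun w => sg (gg m ℓ f a y + tr m (w * y)) with htY
  set term : GaloisField 2 (2*m) × ZMod 2 → ℤ := fun q =>
    (2^m - sg q.2 * W q.1) * (1 - tX q.1 * sg q.2) * (1 - tY q.1 * sg q.2) with hterm
  -- per-point identity
  have hpt : ∀ q : GaloisField 2 (2*m) × ZMod 2,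
      (if cond q then ((2:ℤ)^(m+3)) else 0) = term q := by
    rintro ⟨w, ε⟩
    have hSeq : wt m (cw m ℓ f (a, w, ε)) = 2^(2*m-1) + 2^(m-1) ↔
        sg ε * W w = -(2^m : ℤ) := by
      rw [wt_iff m hm1, S_cw]
    have hX : sg (cw m ℓ f (a, w, ε) x) = tX w * sg ε := sg_cw m ℓ f a w ε x
    have hY : sg (cw m ℓ f (a, w, ε) y) = tY w * sg ε := sg_cw m ℓ f a w ε y
    by_cases h1 : sg ε * W w = -(2^m : ℤ)
    · by_cases h2 : cw m ℓ f (a, w, ε) x = 1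
      · by_cases h3 : cw m ℓ f (a, w, ε) y = 1
        · rw [if_pos ⟨hSeq.mpr h1, h2, h3⟩]
          have e2 : tX w * sg ε = -1 := by rw [← hX, sg_eq_neg_one_iff]; exact h2
          have e3 : tY w * sg ε = -1 := by rw [← hY, sg_eq_neg_one_iff]; exact h3
          show ((2:ℤ)^(m+3)) = (2^m - sg ε * W w) * (1 - tX w * sg ε) * (1 - tY w * sg ε)
          rw [h1, e2, e3, pow_add]
          ring
        · rw [if_neg (by rintro ⟨_, _, h⟩; exact h3 h)]
          have e3 : tY w * sg ε = 1 := by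
            rcases zmod2_cases (cw m ℓ f (a, w, ε) y) with h | h
            · rw [← hY, h, sg_zero]
            · exact absurd h h3
          show (0:ℤ) = (2^m - sg ε * W w) * (1 - tX w * sg ε) * (1 - tY w * sg ε)
          rw [e3]; ring
      · rw [if_neg (by rintro ⟨_, h, _⟩; exact h2 h)]
        have e2 : tX w * sg ε = 1 := by
          rcases zmod2_cases (cw m ℓ f (a, w, ε) x) with h | h
          · rw [← hX, h, sg_zero]
          · exact absurd h h2
        show (0:ℤ) = (2^m - sg ε * W w) * (1 - tX w * sg ε) * (1 - tY w * sg ε)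
        rw [e2]; ring
    · rw [if_neg (by rintro ⟨h, _, _⟩; exact h1 (hSeq.mp h))]
      have e1 : sg ε * W w = (2^m : ℤ) := by
        rcases sg_cases ε with h | h <;> rcases hW w with h' | h'
        · rw [h, h']; ring
        · exfalso; apply h1; rw [h, h']; ring
        · exfalso; apply h1; rw [h, h']; ring
        · rw [h, h']; ring
      show (0:ℤ) = (2^m - sg ε * W w) * (1 - tX w * sg ε) * (1 - tY w * sg ε)
      rw [e1]; ring
  -- sum identity
  have hsum : ((2:ℤ)^(m+3)) * N = ∑ q : GaloisField 2 (2*m) × ZMod 2, term q := by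
    rw [← Finset.sum_congr rfl (fun q _ => hpt q)]
    rw [← Finset.sum_filter, Finset.sum_const, nsmul_eq_mul, hNdef]
    ring
  -- compute the RHS
  have hinner : ∀ w : GaloisField 2 (2*m),
      ∑ ε : ZMod 2, term (w, ε) =
        2^(m+1) + 2^(m+1) * (tX w * tY w) + 2 * (W w * tX w) + 2 * (W w * tY w) := by
    intro w
    have huniv : (Finset.univ : Finset (ZMod 2)) = {0, 1} := by decide
    rw [huniv, Finset.sum_pair (by decide : (0 : ZMod 2) ≠ 1)]
    show (2^m - sg 0 * W w) * (1 - tX w * sg 0) * (1 - tY w * sg 0)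
        + (2^m - sg 1 * W w) * (1 - tX w * sg 1) * (1 - tY w * sg 1) = _
    rw [sg_zero, sg_one, pow_succ]
    ring
  have hRHS : ∑ q : GaloisField 2 (2*m) × ZMod 2, term q =
      2^(3*m+1) + 2^(2*m+2) := by
    rw [← Finset.univ_product_univ, Finset.sum_product]
    rw [Finset.sum_congr rfl (fun w _ => hinner w)]
    rw [Finset.sum_add_distrib, Finset.sum_add_distrib, Finset.sum_add_distrib]
    rw [Finset.sum_const, Finset.card_univ, card_F m hm1]
    rw [← Finset.mul_sum, ← Finset.mul_sum, ← Finset.mul_sum]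
    rw [key3 m hm1 (gg m ℓ f a) x y hxy]
    have k2x := key2 m hm1 (gg m ℓ f a) x
    have k2y := key2 m hm1 (gg m ℓ f a) y
    rw [show (∑ w : GaloisField 2 (2*m), W w * tX w) = 2^(2*m) from k2x]
    rw [show (∑ w : GaloisField 2 (2*m), W w * tY w) = 2^(2*m) from k2y]
    rw [nsmul_eq_mul]
    push_cast
    rw [show (3*m+1) = (2*m) + (m+1) by ring, show (2*m+2) = (2*m) + 2 by ring,
      pow_add, pow_add]
    ring
  have hfin : ((2:ℤ)^(m+3)) * N = 2^(m+3) * (2^(2*m-2) + 2^(m-1)) := by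
    rw [hsum, hRHS]
    rw [show (3*m+1) = (m+3) + (2*m-2) by omega, show (2*m+2) = (m+3) + (m-1) by omega,
      pow_add, pow_add]
    ring
  have hN : (N : ℤ) = 2^(2*m-2) + 2^(m-1) :=
    mul_left_cancel₀ (by positivity) hfin
  exact_mod_cast hN

open Classical in
lemma count_a_zero (m ℓ : ℕ) (hm : 1 ≤ m) (f : Fin ℓ → GaloisField 2 (2*m) → ZMod 2)
    (x y : GaloisField 2 (2*m)) :
    (Finset.univ.filter (fun q : GaloisField 2 (2*m) × ZMod 2 =>
      wt m (cw m ℓ f ((0 : Fin ℓ → ZMod 2), q)) = 2^(2*m-1) + 2^(m-1) ∧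
      cw m ℓ f (0, q) x = 1 ∧ cw m ℓ f (0, q) y = 1)).card = 0 := by
  classical
  rw [Finset.card_eq_zero, Finset.filter_eq_empty_iff]
  rintro ⟨w, ε⟩ _ ⟨h1, _, _⟩
  rw [wt_iff m hm] at h1
  rw [S_cw] at h1
  have hz : ∀ z : GaloisField 2 (2*m),
      sg (gg m ℓ f 0 z + tr m (w * z)) = sg (tr m (z * w)) := by
    intro z; rw [gg_zero, zero_add, mul_comm]
  rw [Finset.sum_congr rfl (fun z _ => hz z), char_sum m hm] at h1
  by_cases hw : w = 0
  · rw [if_pos hw] at h1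
    have : |sg ε * 2^(2*m)| = |-(2^m : ℤ)| := by rw [h1]
    rw [abs_mul, abs_neg] at this
    have habs : |sg ε| = 1 := by
      rcases sg_cases ε with h | h <;> rw [h] <;> norm_num
    rw [habs, one_mul, abs_of_nonneg (by positivity : (0:ℤ) ≤ 2^(2*m)),
      abs_of_nonneg (by positivity : (0:ℤ) ≤ 2^m)] at this
    have hlt : (2:ℤ)^m < 2^(2*m) := by
      apply pow_lt_pow_right₀ (by norm_num) (by omega)
    linarith
  · rw [if_neg hw, mul_zero] at h1
    have : (0:ℤ) < 2^m := by positivity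
    linarith

end Aux

/-- the codewords of weight `2^(2m-1) + 2^(m-1)` of
`C(f_1, …, f_ℓ)` hold a
`2-(2^(2m), 2^(2m-1) + 2^(m-1), (2^ℓ-1)(2^(2m-2) + 2^(m-1)))` design. -/
theorem stmt_2 (m ℓ : ℕ) (hm : 2 ≤ m) (hℓ1 : 1 ≤ ℓ) (hℓm : ℓ ≤ m)
    (f : Fin ℓ → GaloisField 2 (2*m) → ZMod 2) (hf : IsBentVectorial m ℓ f) :
    ∀ x y : GaloisField 2 (2*m), x ≠ y →
      {c | c ∈ code m ℓ f ∧ wt m c = 2^(2*m-1) + 2^(m-1) ∧ c x = 1 ∧ c y = 1}.ncard =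
        (2^ℓ - 1) * (2^(2*m-2) + 2^(m-1)) := by
  intro x y hxy
  classical
  have hm1 : 1 ≤ m := by omega
  set P : ((Fin ℓ → ZMod 2) × GaloisField 2 (2*m) × ZMod 2) → Prop := fun p =>
    wt m (cw m ℓ f p) = 2^(2*m-1) + 2^(m-1) ∧ cw m ℓ f p x = 1 ∧ cw m ℓ f p y = 1
    with hPdef
  have hset : {c | c ∈ code m ℓ f ∧ wt m c = 2^(2*m-1) + 2^(m-1) ∧ c x = 1 ∧ c y = 1}
      = cw m ℓ f '' {p | P p} := by
    ext c
    constructor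
    · rintro ⟨hc, h1, h2, h3⟩
      obtain ⟨p, rfl⟩ := mem_code m ℓ f c hc
      exact ⟨p, ⟨h1, h2, h3⟩, rfl⟩
    · rintro ⟨p, ⟨h1, h2, h3⟩, rfl⟩
      exact ⟨cw_mem m ℓ f p, h1, h2, h3⟩
  rw [hset, Set.ncard_image_of_injective _ (cw_inj m ℓ hm1 f hf)]
  rw [Set.ncard_eq_toFinset_card' {p | P p}]
  rw [Set.toFinset_setOf]
  -- now a Finset computation
  rw [Finset.card_filter]
  rw [← Finset.univ_product_univ, Finset.sum_product]
  have hinner : ∀ a : Fin ℓ → ZMod 2,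
      (∑ q : GaloisField 2 (2*m) × ZMod 2, if P (a, q) then 1 else 0)
        = if a = 0 then 0 else 2^(2*m-2) + 2^(m-1) := by
    intro a
    rw [← Finset.card_filter]
    by_cases ha : a = 0
    · subst ha
      rw [if_pos rfl]
      exact count_a_zero m ℓ hm1 f x y
    · rw [if_neg ha]
      exact count_a_ne m ℓ hm f hf a ha x y hxy
  rw [Finset.sum_congr rfl (fun a _ => hinner a)]
  rw [Finset.sum_ite, Finset.sum_const, Finset.sum_const, smul_eq_mul, mul_zero, zero_add,
    smul_eq_mul]
  have hcard : (Finset.univ.filter (fun a : Fin ℓ → ZMod 2 => ¬ a = 0)).card = 2^ℓ - 1 := by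
    have h1 : (Finset.univ.filter (fun a : Fin ℓ → ZMod 2 => ¬ a = 0))
        = Finset.univ.erase 0 := by
      ext a; simp [Finset.mem_erase, and_comm]
    rw [h1, Finset.card_erase_of_mem (Finset.mem_univ _), Finset.card_univ]
    have h2 : Fintype.card (Fin ℓ → ZMod 2) = 2^ℓ := by
      rw [Fintype.card_fun, Fintype.card_fin]
      norm_num
    rw [h2]
  rw [hcard]
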